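/- Let σ > 0 and l₁, l₂ > 0 with sin(σl₁) ≠ 0 and sin(σl₂) ≠ 0. Set S = diag(sin σl₁, sin σl₂), C = diag(cos σl₁, cos σl₂); let B be a real symmetric 2×2 matrix, δ ∈ ℝ² a vector, and c ∈ ℝ. Set P = C + SB and assume I - P² is invertible; set n = ⟨δ, (I - P²)⁻¹Sδ⟩ and m = c + ⟨δ, (I - P²)⁻¹PSδ⟩ and assume n ≠ 0. Suppose vectors φ₀, φ₁ ∈ ℝ² and scalars p₀, q₀, p₁, q₁ ∈ ℝ satisfy the four equations: -(CS⁻¹ + B)φ₀ + S⁻¹φ₁ = p₀ δ; -q₀ = ⟨δ, φ₀⟩ + c p₀; -(CS⁻¹ + B)φ₁ + S⁻¹φ₀ = p₁ δ; q₁ = ⟨δ, φ₁⟩ + c p₁. Then (p₁, q₁)ᵀ = T_σ (p₀, q₀)ᵀ, where T_σ is the 2×2 matrix T_σ = -[[m/n, 1/n], [(m² - n²)/n, m/n]]. -/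

import Mathlib

open Matrix

/-- The transfer matrix over the loop of the necklace graph: if the Cauchy data
`(p₀, q₀)` and `(p₁, q₁)` on the straight edges and the arch values `φ₀, φ₁` satisfy the
vertex (gluing) equations, then `(p₁, q₁)ᵀ = T_σ (p₀, q₀)ᵀ` with
`T_σ = -[[m/n, 1/n], [(m² - n²)/n, m/n]]`. -/
theorem necklace_loop_transfer_matrix (σ l₁ l₂ : ℝ) (hσ : 0 < σ)
    (hl₁ : 0 < l₁) (hl₂ : 0 < l₂)
    (hs₁ : Real.sin (σ * l₁) ≠ 0) (hs₂ : Real.sin (σ * l₂) ≠ 0)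
    (S C : Matrix (Fin 2) (Fin 2) ℝ)
    (hS : S = Matrix.diagonal ![Real.sin (σ * l₁), Real.sin (σ * l₂)])
    (hC : C = Matrix.diagonal ![Real.cos (σ * l₁), Real.cos (σ * l₂)])
    (B : Matrix (Fin 2) (Fin 2) ℝ) (hB : Bᵀ = B) (δ : Fin 2 → ℝ) (c : ℝ)
    (P : Matrix (Fin 2) (Fin 2) ℝ) (hP : P = C + S * B)
    (hinv : IsUnit (1 - P ^ 2))
    (n m : ℝ)
    (hn : n = δ ⬝ᵥ ((1 - P ^ 2)⁻¹ * S).mulVec δ)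
    (hm : m = c + δ ⬝ᵥ ((1 - P ^ 2)⁻¹ * (P * S)).mulVec δ)
    (hn0 : n ≠ 0)
    (φ₀ φ₁ : Fin 2 → ℝ) (p₀ q₀ p₁ q₁ : ℝ)
    (h1 : -(C * S⁻¹ + B).mulVec φ₀ + S⁻¹.mulVec φ₁ = p₀ • δ)
    (h2 : -q₀ = δ ⬝ᵥ φ₀ + c * p₀)
    (h3 : -(C * S⁻¹ + B).mulVec φ₁ + S⁻¹.mulVec φ₀ = p₁ • δ)
    (h4 : q₁ = δ ⬝ᵥ φ₁ + c * p₁) :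
    ![p₁, q₁] = (-(!![m / n, 1 / n; (m ^ 2 - n ^ 2) / n, m / n])).mulVec ![p₀, q₀] := by
  -- S is invertible
  have hSdet : IsUnit S.det := by
    subst hS
    simp [Matrix.det_diagonal, Fin.prod_univ_two, isUnit_iff_ne_zero, hs₁, hs₂]
  have hSS : S * S⁻¹ = 1 := Matrix.mul_nonsing_inv S hSdet
  have hSC : S * C = C * S := by
    subst hS hC
    simp [Matrix.diagonal_mul_diagonal, mul_comm]
  have hSP : S * (C * S⁻¹ + B) = P := by
    rw [hP, mul_add, ← mul_assoc, hSC, mul_assoc, hSS, mul_one]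
  -- turn the gluing equations into φ₁ = Pφ₀ + p₀ Sδ and φ₀ = Pφ₁ + p₁ Sδ
  have key : ∀ (φ ψ : Fin 2 → ℝ) (p : ℝ),
      -(C * S⁻¹ + B).mulVec φ + S⁻¹.mulVec ψ = p • δ →
      ψ = P.mulVec φ + p • S.mulVec δ := by
    intro φ ψ p h
    have := congrArg S.mulVec h
    simp only [Matrix.mulVec_add, Matrix.mulVec_neg, Matrix.mulVec_smul,
      Matrix.mulVec_mulVec, hSP, hSS] at this
    rw [Matrix.one_mulVec] at this
    linear_combination (norm := module) this
  have e1 : φ₁ = P.mulVec φ₀ + p₀ • S.mulVec δ := key _ _ _ h1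
  have e0 : φ₀ = P.mulVec φ₁ + p₁ • S.mulVec δ := key _ _ _ h3
  -- invertibility of 1 - P²
  have hQdet : IsUnit (1 - P ^ 2).det := (Matrix.isUnit_iff_isUnit_det _).mp hinv
  have hQ : (1 - P ^ 2)⁻¹ * (1 - P ^ 2) = 1 := Matrix.nonsing_inv_mul _ hQdet
  -- solve for φ₀ and φ₁
  have solve : ∀ (φ ψ : Fin 2 → ℝ) (p q : ℝ),
      ψ = P.mulVec φ + p • S.mulVec δ →
      φ = P.mulVec ψ + q • S.mulVec δ →
      φ = p • ((1 - P ^ 2)⁻¹ * (P * S)).mulVec δ + q • ((1 - P ^ 2)⁻¹ * S).mulVec δ := by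
    intro φ ψ p q hψ hφ
    have h : φ = P.mulVec (P.mulVec φ) + (p • (P * S).mulVec δ + q • S.mulVec δ) := by
      calc φ = P.mulVec ψ + q • S.mulVec δ := hφ
        _ = _ := by
          rw [hψ]
          simp only [Matrix.mulVec_add, Matrix.mulVec_smul, Matrix.mulVec_mulVec]
          abel
    have step : (1 - P ^ 2).mulVec φ = p • (P * S).mulVec δ + q • S.mulVec δ := by
      rw [Matrix.sub_mulVec, Matrix.one_mulVec, pow_two, ← Matrix.mulVec_mulVec]
      nth_rw 1 [h]
      abel
    have := congrArg (1 - P ^ 2)⁻¹.mulVec step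
    simp only [Matrix.mulVec_add, Matrix.mulVec_smul, Matrix.mulVec_mulVec, hQ] at this
    rwa [Matrix.one_mulVec] at this
  have hφ₀ : φ₀ = p₀ • ((1 - P ^ 2)⁻¹ * (P * S)).mulVec δ
      + p₁ • ((1 - P ^ 2)⁻¹ * S).mulVec δ := solve _ _ _ _ e1 e0
  have hφ₁ : φ₁ = p₁ • ((1 - P ^ 2)⁻¹ * (P * S)).mulVec δ
      + p₀ • ((1 - P ^ 2)⁻¹ * S).mulVec δ := solve _ _ _ _ e0 e1
  -- inner products
  have d0 : δ ⬝ᵥ φ₀ = p₀ * (m - c) + p₁ * n := by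
    rw [hφ₀, dotProduct_add, dotProduct_smul, dotProduct_smul, hn, hm]
    simp only [smul_eq_mul]; ring
  have d1 : δ ⬝ᵥ φ₁ = p₁ * (m - c) + p₀ * n := by
    rw [hφ₁, dotProduct_add, dotProduct_smul, dotProduct_smul, hn, hm]
    simp only [smul_eq_mul]; ring
  rw [d0] at h2
  rw [d1] at h4
  funext i
  fin_cases i <;>
    simp only [Matrix.mulVec, Matrix.neg_apply, Matrix.cons_val', Matrix.cons_val_zero,
      Matrix.cons_val_one, Matrix.head_cons, Matrix.empty_val', Matrix.cons_val_fin_one,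
      Matrix.head_fin_const, dotProduct, Fin.sum_univ_two, Matrix.of_apply,
      Pi.neg_apply, Fin.zero_eta, Fin.mk_one, Matrix.cons_val_zero, Matrix.cons_val_one, Matrix.head_cons] <;>
    field_simp
  · linear_combination (-1) * h2
  · linear_combination n * h4 + (-m) * h2
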